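/- For every β ≥ 0, the function F_β(x) = arctanh(tanh(β)·tanh(x)) is concave on the half-line x ≥ 0. -/

import Mathlib

noncomputable def artanh (x : ℝ) : ℝ := Real.log ((1 + x) / (1 - x)) / 2

noncomputable def F (β x : ℝ) : ℝ := artanh (Real.tanh β * Real.tanh x)

open Real

lemma tanh_sq_lt_one' (x : ℝ) : Real.tanh x ^ 2 < 1 := by
  rw [Real.tanh_eq_sinh_div_cosh, div_pow, div_lt_one (by positivity)]
  nlinarith [Real.cosh_sq_sub_sinh_sq x]

lemma tanh_nonneg' {x : ℝ} (hx : 0 ≤ x) : 0 ≤ Real.tanh x := by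
  rw [Real.tanh_eq_sinh_div_cosh]
  exact div_nonneg (Real.sinh_nonneg_iff.2 hx) (Real.cosh_pos x).le

lemma tanh_mono' {x y : ℝ} (hxy : x ≤ y) : Real.tanh x ≤ Real.tanh y := by
  rw [Real.tanh_eq_sinh_div_cosh, Real.tanh_eq_sinh_div_cosh,
    div_le_div_iff₀ (Real.cosh_pos x) (Real.cosh_pos y)]
  have h : 0 ≤ Real.sinh (y - x) := Real.sinh_nonneg_iff.2 (by linarith)
  rw [Real.sinh_sub] at h
  linarith

lemma hasDerivAt_tanh' (x : ℝ) :
    HasDerivAt Real.tanh (1 - Real.tanh x ^ 2) x := by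
  have h : HasDerivAt (fun x => Real.sinh x / Real.cosh x)
      ((Real.cosh x * Real.cosh x - Real.sinh x * Real.sinh x) / Real.cosh x ^ 2) x :=
    (Real.hasDerivAt_sinh x).div (Real.hasDerivAt_cosh x) (Real.cosh_pos x).ne'
  have he : Real.tanh = fun x => Real.sinh x / Real.cosh x := by
    funext y; exact Real.tanh_eq_sinh_div_cosh y
  rw [he]
  convert h using 1
  have hc := (Real.cosh_pos x).ne'
  have hs := Real.cosh_sq_sub_sinh_sq x
  field_simp [Real.tanh_eq_sinh_div_cosh]

lemma mul_tanh_bounds {β x : ℝ} (hβ : 0 ≤ β) :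
    (Real.tanh β * Real.tanh x) ^ 2 < 1 := by
  have h1 := tanh_sq_lt_one' β
  have h2 := tanh_sq_lt_one' x
  nlinarith [sq_nonneg (Real.tanh β), sq_nonneg (Real.tanh x)]

lemma hasDerivAt_F (β : ℝ) (hβ : 0 ≤ β) (x : ℝ) :
    HasDerivAt (F β)
      (Real.tanh β * (1 - Real.tanh x ^ 2) / (1 - (Real.tanh β * Real.tanh x) ^ 2)) x := by
  set t := Real.tanh β with ht
  have hb : ∀ y : ℝ, 0 < 1 + t * Real.tanh y ∧ 0 < 1 - t * Real.tanh y := by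
    intro y
    have := mul_tanh_bounds (x := y) hβ
    constructor <;> nlinarith
  have heq : F β = fun y => (Real.log (1 + t * Real.tanh y) - Real.log (1 - t * Real.tanh y)) / 2 := by
    funext y
    rw [F, _root_.artanh, Real.log_div (hb y).1.ne' (hb y).2.ne']
  rw [heq]
  have h1 : HasDerivAt (fun y => 1 + t * Real.tanh y) (t * (1 - Real.tanh x ^ 2)) x :=
    (((hasDerivAt_tanh' x).const_mul t)).const_add 1
  have h2 : HasDerivAt (fun y => 1 - t * Real.tanh y) (-(t * (1 - Real.tanh x ^ 2))) x :=
    ((hasDerivAt_tanh' x).const_mul t).const_sub 1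
  have h3 := ((h1.log (hb x).1.ne').sub (h2.log (hb x).2.ne')).div_const 2
  refine HasDerivAt.congr_deriv (h3 : HasDerivAt (fun y => (Real.log (1 + t * Real.tanh y) - Real.log (1 - t * Real.tanh y)) / 2) _ x) ?_
  have hx1 := (hb x).1.ne'
  have hx2 := (hb x).2.ne'
  have hx3 : (1 : ℝ) - (t * Real.tanh x) ^ 2 ≠ 0 := by
    have := mul_tanh_bounds (x := x) hβ
    nlinarith
  rw [mul_pow] at hx3 ⊢
  field_simp
  ring

theorem stmt_3 (β : ℝ) (hβ : 0 ≤ β) : ConcaveOn ℝ (Set.Ici (0 : ℝ)) (F β) := by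
  have hder : ∀ x : ℝ, deriv (F β) x
      = Real.tanh β * (1 - Real.tanh x ^ 2) / (1 - (Real.tanh β * Real.tanh x) ^ 2) :=
    fun x => (hasDerivAt_F β hβ x).deriv
  apply AntitoneOn.concaveOn_of_deriv (convex_Ici 0)
  · exact fun x _ => (hasDerivAt_F β hβ x).continuousAt.continuousWithinAt
  · exact fun x _ => ((hasDerivAt_F β hβ x).differentiableAt).differentiableWithinAt
  · rw [interior_Ici]
    intro x hx y hy hxy
    rw [hder x, hder y]
    set t := Real.tanh β with ht
    have ht0 : 0 ≤ t := tanh_nonneg' hβ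
    have ht1 : t ^ 2 < 1 := tanh_sq_lt_one' β
    have hs0 : 0 ≤ Real.tanh x := tanh_nonneg' (le_of_lt hx)
    have hsu : Real.tanh x ≤ Real.tanh y := tanh_mono' hxy
    have hu1 : Real.tanh y ^ 2 < 1 := tanh_sq_lt_one' y
    have hdx : 0 < 1 - (t * Real.tanh x) ^ 2 := by nlinarith [mul_tanh_bounds (x := x) hβ]
    have hdy : 0 < 1 - (t * Real.tanh y) ^ 2 := by nlinarith [mul_tanh_bounds (x := y) hβ]
    rw [div_le_div_iff₀ hdy hdx]
    have hsq : Real.tanh x ^ 2 ≤ Real.tanh y ^ 2 := by nlinarith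
    have key : 0 ≤ t * ((1 - t ^ 2) * (Real.tanh y ^ 2 - Real.tanh x ^ 2)) :=
      mul_nonneg ht0 (mul_nonneg (by linarith) (by linarith))
    nlinarith [key]
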